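/- Let K ≥ 1, n₁,…,n_K > 0, λ₁ ≥ 0, λ₂ ≥ 0, let S¹,…,Sᴷ be symmetric p×p real matrices, let (I₁,…,I_L) be a partition of {1,…,p}, and let T = ∪_{l=1}^L I_l × I_l. Let h be a real-valued function on K-tuples of p×p real matrices such that h(Θ¹,…,Θᴷ) > h(Θ¹_T,…,Θᴷ_T) for any K-tuple of matrices Θ¹,…,Θᴷ whose combined support strictly contains T (i.e., each Θᵏ_T ≠ Θᵏ for at least one k while considering the restrictions to T). If n_k|Sᵏ_{ij}| ≤ λ₁ for all (i,j) ∈ T^c and all k = 1,…,K, then every K-tuple (Θ̂¹,…,Θ̂ᴷ) of symmetric positive definite p×p matrices minimizing F(Θ¹,…,Θᴷ) = Σ_{k=1}^K n_k(−log det Θᵏ + trace(SᵏΘᵏ)) + λ₁ Σ_{k=1}^K Σ_{i,j}|Θᵏ_{ij}| + λ₂ h(Θ¹,…,Θᴷ) over all K-tuples of symmetric positive definite matrices has the property that each Θ̂ᵏ is supported on T. -/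

import Mathlib

open Matrix
open scoped BigOperators

/-- The restriction of a K-tuple of p×p matrices to T = ∪_l I_l × I_l:
entries with indices in T are retained, all other entries are set to zero. -/
def restrT {K p L : ℕ} (I : Fin L → Finset (Fin p))
    (Θ : Fin K → Matrix (Fin p) (Fin p) ℝ) :
    Fin K → Matrix (Fin p) (Fin p) ℝ :=
  fun k => Matrix.of fun i j => if ∃ l, i ∈ I l ∧ j ∈ I l then Θ k i j else 0

/-- A generic joint graphical-model objective with regularizer h:
Σ_k n_k(−log det Θᵏ + trace(SᵏΘᵏ)) + λ₁ Σ_k Σ_{i,j}|Θᵏ_{ij}| + λ₂ h(Θ¹,…,Θᴷ). -/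
noncomputable def genObj {K p : ℕ} (n : Fin K → ℝ) (lam₁ lam₂ : ℝ)
    (S : Fin K → Matrix (Fin p) (Fin p) ℝ)
    (h : (Fin K → Matrix (Fin p) (Fin p) ℝ) → ℝ)
    (Θ : Fin K → Matrix (Fin p) (Fin p) ℝ) : ℝ :=
  (∑ k : Fin K, n k * (-Real.log (Θ k).det + (S k * Θ k).trace))
    + lam₁ * (∑ k : Fin K, ∑ i : Fin p, ∑ j : Fin p, |Θ k i j|)
    + lam₂ * h Θ

/-- The trace of a real Hermitian matrix is the sum of its eigenvalues. -/
lemma auxTraceSumEig {n : Type*} [Fintype n] [DecidableEq n] {M : Matrix n n ℝ}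
    (hM : M.IsHermitian) : M.trace = ∑ i, hM.eigenvalues i := by
  conv_lhs => rw [hM.spectral_theorem]
  rw [Unitary.conjStarAlgAut_apply, Matrix.trace_mul_cycle]
  simp [Matrix.trace_diagonal]

/-- The determinant of a real Hermitian matrix is the product of its eigenvalues. -/
lemma auxDetProdEig {n : Type*} [Fintype n] [DecidableEq n] {M : Matrix n n ℝ}
    (hM : M.IsHermitian) : M.det = ∏ i, hM.eigenvalues i := by
  rw [hM.det_eq_prod_eigenvalues]; norm_num

/-- A Hermitian matrix all of whose eigenvalues equal 1 is the identity. -/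
lemma auxEqOneOfEig {n : Type*} [Fintype n] [DecidableEq n] {M : Matrix n n ℝ}
    (hM : M.IsHermitian) (h1 : ∀ i, hM.eigenvalues i = 1) : M = 1 := by
  conv_lhs => rw [hM.spectral_theorem]
  have : Matrix.diagonal (RCLike.ofReal ∘ hM.eigenvalues) = (1 : Matrix n n ℝ) := by
    simp [funext h1, Function.comp_def]
  rw [this, Unitary.conjStarAlgAut_apply, mul_one]
  simp

open scoped MatrixOrder in
/-- If A, B are positive definite with trace(B⁻¹A) = p and A ≠ B, then det A < det B. -/
lemma auxDetLtDet {p : ℕ} {A B : Matrix (Fin p) (Fin p) ℝ} (hA : A.PosDef) (hB : B.PosDef)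
    (htr : (B⁻¹ * A).trace = (p : ℝ)) (hne : A ≠ B) : A.det < B.det := by
  set s := CFC.sqrt B with hs
  have hss : s * s = B := CFC.sqrt_mul_sqrt_self B hB.posSemidef.nonneg
  have hsH : s.IsHermitian := (CFC.sqrt_nonneg B).posSemidef.1
  have hdets : s.det * s.det = B.det := by rw [← Matrix.det_mul, hss]
  have hdetsne : s.det ≠ 0 := by
    intro h; rw [h, mul_zero] at hdets; exact hB.det_pos.ne (hdets)
  have hsu : IsUnit s.det := hdetsne.isUnit
  have hsinv : s * s⁻¹ = 1 := Matrix.mul_nonsing_inv s hsu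
  have hinvs : s⁻¹ * s = 1 := Matrix.nonsing_inv_mul s hsu
  set M := s⁻¹ * A * s⁻¹ with hMdef
  have hMpsd : M.PosSemidef := by
    have : M = s⁻¹ * A * (s⁻¹)ᴴ := by
      rw [hMdef, Matrix.conjTranspose_nonsing_inv, hsH.eq]
    rw [this]
    exact hA.posSemidef.mul_mul_conjTranspose_same _
  have hM : M.IsHermitian := hMpsd.1
  have hdetM : M.det * B.det = A.det := by
    have : M.det = s.det⁻¹ * A.det * s.det⁻¹ := by
      rw [hMdef, Matrix.det_mul, Matrix.det_mul, Matrix.det_nonsing_inv, Ring.inverse_eq_inv']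
    rw [this, ← hdets]; field_simp
  have hdetMpos : 0 < M.det := by
    have := hA.det_pos
    nlinarith [hB.det_pos, mul_pos hA.det_pos (inv_pos.mpr hB.det_pos)]
  have htrM : M.trace = (p : ℝ) := by
    have h1 : M.trace = (s⁻¹ * s⁻¹ * A).trace := by
      rw [hMdef, Matrix.trace_mul_cycle]
    have h2 : s⁻¹ * s⁻¹ = B⁻¹ := by rw [← Matrix.mul_inv_rev, hss]
    rw [h1, h2, htr]
  set μ := hM.eigenvalues with hμ
  have hprod : M.det = ∏ i, μ i := auxDetProdEig hM
  have hsum : M.trace = ∑ i, μ i := auxTraceSumEig hM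
  have hμpos : ∀ i, 0 < μ i := by
    intro i
    rcases lt_or_eq_of_le (hMpsd.eigenvalues_nonneg i) with h | h
    · exact h
    · exfalso
      rw [hprod] at hdetMpos
      have := Finset.prod_eq_zero (Finset.mem_univ i) (h.symm : μ i = 0)
      rw [this] at hdetMpos; exact lt_irrefl _ hdetMpos
  have hMne1 : M ≠ 1 := by
    intro hM1
    apply hne
    have : s * M * s = A := by
      rw [hMdef]; rw [show s * (s⁻¹ * A * s⁻¹) * s = (s * s⁻¹) * A * (s⁻¹ * s) by noncomm_ring]
      rw [hsinv, hinvs, one_mul, mul_one]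
    rw [hM1, mul_one, hss] at this
    exact this.symm
  have hex : ∃ i, μ i ≠ 1 := by
    by_contra hc
    push_neg at hc
    exact hMne1 (auxEqOneOfEig hM hc)
  obtain ⟨i₀, hi₀⟩ := hex
  have hlog : Real.log M.det = ∑ i, Real.log (μ i) := by
    rw [hprod, Real.log_prod]
    exact fun i _ => (hμpos i).ne'
  have hlt : Real.log M.det < 0 := by
    rw [hlog]
    have : ∑ i, Real.log (μ i) < ∑ i, (μ i - 1) := by
      apply Finset.sum_lt_sum
      · exact fun i _ => Real.log_le_sub_one_of_pos (hμpos i)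
      · exact ⟨i₀, Finset.mem_univ _, Real.log_lt_sub_one_of_pos (hμpos i₀) hi₀⟩
    have hsum1 : ∑ i : Fin p, (μ i - 1) = 0 := by
      rw [Finset.sum_sub_distrib, ← hsum, htrM]
      simp
    linarith
  have hdM1 : M.det < 1 := by
    rwa [← Real.log_neg_iff hdetMpos]
  calc A.det = M.det * B.det := hdetM.symm
    _ < 1 * B.det := by
        apply mul_lt_mul_of_pos_right hdM1 hB.det_pos
    _ = B.det := one_mul _

/-- The restriction of a positive definite matrix to the block diagonal given by a
partition is positive definite. -/
lemma auxRestrPosDef {p L : ℕ} (I : Fin L → Finset (Fin p))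
    (hpart : ∀ i : Fin p, ∃! l, i ∈ I l) {A : Matrix (Fin p) (Fin p) ℝ} (hA : A.PosDef) :
    (Matrix.of fun i j => if ∃ l, i ∈ I l ∧ j ∈ I l then A i j else 0 :
      Matrix (Fin p) (Fin p) ℝ).PosDef := by
  rw [Matrix.posDef_iff_dotProduct_mulVec]
  constructor
  · ext i j
    simp only [Matrix.conjTranspose_apply, Matrix.of_apply, star_trivial]
    have hsymm : (∃ l, j ∈ I l ∧ i ∈ I l) ↔ (∃ l, i ∈ I l ∧ j ∈ I l) :=
      exists_congr fun l => and_comm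
    by_cases hc : ∃ l, i ∈ I l ∧ j ∈ I l
    · rw [if_pos (hsymm.mpr hc), if_pos hc]
      exact (Matrix.IsHermitian.apply hA.1 j i).symm.trans (star_trivial _) |>.symm ▸ rfl
    · rw [if_neg (fun hx => hc (hsymm.mp hx)), if_neg hc]
  · intro x hx
    set y : Fin L → (Fin p → ℝ) := fun l i => if i ∈ I l then x i else 0 with hy
    have key : dotProduct (star x)
        ((Matrix.of fun i j => if ∃ l, i ∈ I l ∧ j ∈ I l then A i j else 0) *ᵥ x)
        = ∑ l, dotProduct (star (y l)) (A *ᵥ (y l)) := by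
      simp only [dotProduct, Matrix.mulVec, Matrix.of_apply, star_trivial,
        Pi.star_apply, Finset.mul_sum]
      rw [Finset.sum_comm (γ := Fin L)]
      · apply Finset.sum_congr rfl
        intro i _
        rw [Finset.sum_comm (γ := Fin L)]
        · apply Finset.sum_congr rfl
          intro j _
          obtain ⟨l₀, hl₀, hu⟩ := hpart i
          rw [Finset.sum_eq_single l₀]
          · by_cases hj : j ∈ I l₀
            · rw [if_pos ⟨l₀, hl₀, hj⟩]
              simp [y, hl₀, hj]
            · rw [if_neg]
              · simp [y, hj]
              · rintro ⟨l, hil, hjl⟩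
                exact hj ((hu l hil) ▸ hjl)
          · intro b _ hb
            have : i ∉ I b := fun hib => hb (hu b hib)
            simp [y, this]
          · intro habs; exact absurd (Finset.mem_univ l₀) habs
    rw [key]
    have hnn : ∀ l ∈ Finset.univ, 0 ≤ dotProduct (star (y l)) (A *ᵥ (y l)) :=
      fun l _ => hA.posSemidef.dotProduct_mulVec_nonneg (y l)
    obtain ⟨i₀, hi₀⟩ := Function.ne_iff.mp hx
    obtain ⟨l₀, hl₀, _⟩ := hpart i₀
    have hyne : y l₀ ≠ 0 := by
      intro h0
      have : y l₀ i₀ = 0 := by rw [h0]; rfl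
      simp only [y, if_pos hl₀] at this
      exact hi₀ this
    exact Finset.sum_pos' hnn ⟨l₀, Finset.mem_univ _, hA.dotProduct_mulVec_pos hyne⟩

/-- The inverse of an invertible matrix supported on the block diagonal T is supported on T. -/
lemma auxInvSupported {p L : ℕ} (I : Fin L → Finset (Fin p))
    (hpart : ∀ i : Fin p, ∃! l, i ∈ I l) {B : Matrix (Fin p) (Fin p) ℝ}
    (hB : IsUnit B.det)
    (hsupp : ∀ i j, ¬ (∃ l, i ∈ I l ∧ j ∈ I l) → B i j = 0) :
    ∀ i j, ¬ (∃ l, i ∈ I l ∧ j ∈ I l) → B⁻¹ i j = 0 := by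
  classical
  set C : Matrix (Fin p) (Fin p) ℝ :=
    Matrix.of (fun i j => if ∃ l, i ∈ I l ∧ j ∈ I l then B⁻¹ i j else 0) with hCdef
  have hCB : C * B = 1 := by
    ext i j
    obtain ⟨l₀, hl₀, hu⟩ := hpart i
    have hC : ∀ m, C i m = if m ∈ I l₀ then B⁻¹ i m else 0 := by
      intro m
      simp only [hCdef, Matrix.of_apply]
      by_cases hm : m ∈ I l₀
      · rw [if_pos ⟨l₀, hl₀, hm⟩, if_pos hm]
      · rw [if_neg, if_neg hm]
        rintro ⟨l, hil, hml⟩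
        exact hm ((hu l hil) ▸ hml)
    rw [Matrix.mul_apply]
    by_cases hj : j ∈ I l₀
    · have heq : ∀ m, C i m * B m j = B⁻¹ i m * B m j := by
        intro m
        rw [hC m]
        by_cases hm : m ∈ I l₀
        · rw [if_pos hm]
        · rw [if_neg hm, zero_mul, hsupp m j, mul_zero]
          rintro ⟨l, hml, hjl⟩
          obtain ⟨lj, _, huj⟩ := hpart j
          have h1 : l = lj := huj l hjl
          have h2 : l₀ = lj := huj l₀ hj
          exact hm (h1.trans h2.symm ▸ hml)
      simp_rw [heq]
      rw [← Matrix.mul_apply, Matrix.nonsing_inv_mul B hB]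
    · have heq : ∀ m, C i m * B m j = 0 := by
        intro m
        rw [hC m]
        by_cases hm : m ∈ I l₀
        · rw [if_pos hm, hsupp m j, mul_zero]
          rintro ⟨l, hml, hjl⟩
          obtain ⟨lm, _, hum⟩ := hpart m
          have h1 : l = lm := hum l hml
          have h2 : l₀ = lm := hum l₀ hm
          exact hj ((h2.trans h1.symm) ▸ hjl)
        · rw [if_neg hm, zero_mul]
      simp_rw [heq]
      rw [Finset.sum_const_zero]
      have hij : i ≠ j := fun hij => hj (hij ▸ hl₀)
      rw [Matrix.one_apply_ne hij]
  have hCinv : C = B⁻¹ := by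
    calc C = C * (B * B⁻¹) := by rw [Matrix.mul_nonsing_inv B hB, mul_one]
    _ = (C * B) * B⁻¹ := by rw [mul_assoc]
    _ = B⁻¹ := by rw [hCB, one_mul]
  intro i j hij
  rw [← hCinv]
  simp [hCdef, hij]

/-- Theorem 6, general sufficient condition: let h be a penalty
satisfying h(Θ¹,…,Θᴷ) > h(Θ¹_T,…,Θᴷ_T) whenever the support of (Θ¹,…,Θᴷ)
strictly contains T = ∪_l I_l × I_l. If n_k|Sᵏ_{ij}| ≤ λ₁ for all (i,j) ∈ T^c
and all k, then every K-tuple of symmetric positive definite matrices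
minimizing the objective is supported on T. -/
theorem generic_sufficient (K p L : ℕ) (hK : 1 ≤ K)
    (n : Fin K → ℝ) (hn : ∀ k, 0 < n k)
    (lam₁ lam₂ : ℝ) (hlam₁ : 0 ≤ lam₁) (hlam₂ : 0 ≤ lam₂)
    (S : Fin K → Matrix (Fin p) (Fin p) ℝ) (hS : ∀ k, (S k).IsSymm)
    (I : Fin L → Finset (Fin p)) (hpart : ∀ i : Fin p, ∃! l, i ∈ I l)
    (h : (Fin K → Matrix (Fin p) (Fin p) ℝ) → ℝ)
    (hh : ∀ Θ : Fin K → Matrix (Fin p) (Fin p) ℝ,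
      restrT I Θ ≠ Θ → h (restrT I Θ) < h Θ)
    (hcond : ∀ k, ∀ i j : Fin p, ¬ (∃ l, i ∈ I l ∧ j ∈ I l) →
      n k * |S k i j| ≤ lam₁)
    (Θ : Fin K → Matrix (Fin p) (Fin p) ℝ) (hΘ : ∀ k, (Θ k).PosDef)
    (hmin : ∀ Ψ : Fin K → Matrix (Fin p) (Fin p) ℝ, (∀ k, (Ψ k).PosDef) →
      genObj n lam₁ lam₂ S h Θ ≤ genObj n lam₁ lam₂ S h Ψ) :
    ∀ k, ∀ i j : Fin p, ¬ (∃ l, i ∈ I l ∧ j ∈ I l) → Θ k i j = 0 := by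
  classical
  suffices hPsi : restrT I Θ = Θ by
    intro k i j hij
    conv_lhs => rw [← hPsi]
    simp [restrT, hij]
  by_contra hne
  set Ψ := restrT I Θ with hΨdef
  have hΨPD : ∀ k, (Ψ k).PosDef := fun k => auxRestrPosDef I hpart (hΘ k)
  have hTsymm : ∀ i j : Fin p,
      (∃ l, i ∈ I l ∧ j ∈ I l) ↔ (∃ l, j ∈ I l ∧ i ∈ I l) :=
    fun i j => exists_congr fun l => and_comm
  have hΨsupp : ∀ k i j, ¬ (∃ l, i ∈ I l ∧ j ∈ I l) → Ψ k i j = 0 := by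
    intro k i j hij; simp [hΨdef, restrT, hij]
  -- determinant comparison
  have hdet : ∀ k, (Θ k).det ≤ (Ψ k).det ∧ (Ψ k ≠ Θ k → (Θ k).det < (Ψ k).det) := by
    intro k
    have hunit : IsUnit (Ψ k).det := (hΨPD k).det_pos.ne'.isUnit
    have hinv := auxInvSupported I hpart hunit (hΨsupp k)
    have htr : ((Ψ k)⁻¹ * Θ k).trace = (p : ℝ) := by
      have h1 : ((Ψ k)⁻¹ * Θ k).trace = ((Ψ k)⁻¹ * Ψ k).trace := by
        simp only [Matrix.trace, Matrix.diag, Matrix.mul_apply]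
        apply Finset.sum_congr rfl; intro i _
        apply Finset.sum_congr rfl; intro m _
        by_cases hc : ∃ l, i ∈ I l ∧ m ∈ I l
        · congr 1
          have : Ψ k m i = Θ k m i := by
            simp [hΨdef, restrT, (hTsymm i m).mp hc]
          rw [this]
        · rw [hinv i m hc, zero_mul, zero_mul]
      rw [h1, Matrix.nonsing_inv_mul _ hunit, Matrix.trace_one]
      simp
    constructor
    · by_cases he : Ψ k = Θ k
      · rw [he]
      · exact le_of_lt (auxDetLtDet (hΘ k) (hΨPD k) htr (fun hq => he hq.symm))
    · intro hne'
      exact auxDetLtDet (hΘ k) (hΨPD k) htr (fun hq => hne' hq.symm)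
  obtain ⟨k₀, hk₀⟩ := Function.ne_iff.mp hne
  -- strict inequality for the log-det part
  have h1 : ∑ k, n k * (-Real.log (Ψ k).det) < ∑ k, n k * (-Real.log (Θ k).det) := by
    apply Finset.sum_lt_sum
    · intro k _
      have hle := (hdet k).1
      have hlog : Real.log (Θ k).det ≤ Real.log (Ψ k).det :=
        Real.log_le_log (hΘ k).det_pos hle
      nlinarith [hn k]
    · refine ⟨k₀, Finset.mem_univ _, ?_⟩
      have hlt := (hdet k₀).2 hk₀
      have hlog : Real.log (Θ k₀).det < Real.log (Ψ k₀).det :=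
        Real.log_lt_log (hΘ k₀).det_pos hlt
      nlinarith [hn k₀]
  -- trace + ℓ₁ part
  have h2 : ∀ k, n k * (S k * Ψ k).trace + lam₁ * (∑ i, ∑ j, |Ψ k i j|)
      ≤ n k * (S k * Θ k).trace + lam₁ * (∑ i, ∑ j, |Θ k i j|) := by
    intro k
    have expand : ∀ X : Matrix (Fin p) (Fin p) ℝ,
        n k * (S k * X).trace + lam₁ * (∑ i, ∑ j, |X i j|)
          = ∑ i, ∑ j, (n k * (S k i j * X j i) + lam₁ * |X j i|) := by
      intro X
      have hswap : (∑ i, ∑ j, |X i j|) = ∑ i, ∑ j, |X j i| := Finset.sum_comm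
      rw [hswap]
      simp only [Matrix.trace, Matrix.diag, Matrix.mul_apply, Finset.mul_sum]
      rw [← Finset.sum_add_distrib]
      apply Finset.sum_congr rfl; intro i _
      rw [← Finset.sum_add_distrib]
    rw [expand, expand]
    apply Finset.sum_le_sum; intro i _
    apply Finset.sum_le_sum; intro j _
    by_cases hc : ∃ l, i ∈ I l ∧ j ∈ I l
    · have : Ψ k j i = Θ k j i := by
        simp [hΨdef, restrT, (hTsymm i j).mp hc]
      rw [this]
    · have hz : Ψ k j i = 0 := hΨsupp k j i (fun hx => hc ((hTsymm i j).mpr hx))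
      rw [hz]
      simp only [mul_zero, abs_zero, add_zero]
      have hb := hcond k i j hc
      have habs : |n k * (S k i j * Θ k j i)| = (n k * |S k i j|) * |Θ k j i| := by
        rw [abs_mul, abs_mul, abs_of_pos (hn k), mul_assoc]
      have hneg := neg_abs_le (n k * (S k i j * Θ k j i))
      have hmul : (n k * |S k i j|) * |Θ k j i| ≤ lam₁ * |Θ k j i| :=
        mul_le_mul_of_nonneg_right hb (abs_nonneg _)
      rw [habs] at hneg
      linarith
  -- penalty part
  have h3 : lam₂ * h Ψ ≤ lam₂ * h Θ :=
    mul_le_mul_of_nonneg_left (le_of_lt (hh Θ hne)) hlam₂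
  -- rearranged form of the objective
  have hgen : ∀ X : Fin K → Matrix (Fin p) (Fin p) ℝ,
      genObj n lam₁ lam₂ S h X
        = (∑ k, n k * (-Real.log (X k).det))
          + (∑ k, (n k * (S k * X k).trace + lam₁ * ∑ i, ∑ j, |X k i j|))
          + lam₂ * h X := by
    intro X
    simp only [genObj, mul_add, Finset.sum_add_distrib, Finset.mul_sum]
    ring
  have h2' : (∑ k, (n k * (S k * Ψ k).trace + lam₁ * ∑ i, ∑ j, |Ψ k i j|))
      ≤ ∑ k, (n k * (S k * Θ k).trace + lam₁ * ∑ i, ∑ j, |Θ k i j|) :=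
    Finset.sum_le_sum (fun k _ => h2 k)
  have hlt : genObj n lam₁ lam₂ S h Ψ < genObj n lam₁ lam₂ S h Θ := by
    rw [hgen, hgen]
    linarith
  exact absurd (hmin Ψ hΨPD) (not_le.mpr hlt)
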